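/- Let K be an infinitesimally symplectic 2n×2n matrix satisfying the hypotheses above (τ = (1/2)Tr K² ≠ 0, Kλ = 0 for an (n−1)-dimensional isotropic λ), let β ∈ ℝ^{2n} be a nonzero vector with both β and J·β skew-orthogonal to λ, and set η = K·β, θ = K·J·β. Then [η, θ] = τ·|β|², where |β|² is the Euclidean norm squared of β; in particular sign[η,θ] = sign τ, and η, θ are linearly independent and span im K². -/

import Mathlib

open scoped BigOperators
open Sum

noncomputable section

/-- Phase space `ℝ^{2n}`: index `inl i` is the `q_i` (position) coordinate,
`inr i` is the `p_i` (momentum) coordinate. -/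
abbrev PS (n : ℕ) := (Fin n ⊕ Fin n) → ℝ

/-- Standard symplectic inner product `[z₁,z₂] = q₁·p₂ − p₁·q₂`. -/
def symp {n : ℕ} (u v : PS n) : ℝ :=
  (∑ i, u (inl i) * v (inr i)) - ∑ i, u (inr i) * v (inl i)

/-- Gradient of a function on phase space. -/
def grad {n : ℕ} (F : PS n → ℝ) (z : PS n) : PS n :=
  fun i => fderiv ℝ F z (Pi.single i 1)

/-- Standard Poisson bracket `{F,G} = ∇F·J·∇G`. -/
def poisson {n : ℕ} (F G : PS n → ℝ) (z : PS n) : ℝ :=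
  symp (grad F z) (grad G z)

/-- Standard symplectic matrix `J = [[0,I],[−I,0]]`. -/
def Jmat (n : ℕ) : Matrix (Fin n ⊕ Fin n) (Fin n ⊕ Fin n) ℝ :=
  Matrix.fromBlocks 0 1 (-1) 0

/-- Hamiltonian vector field `ξ = J·∇F`. -/
def ham {n : ℕ} (F : PS n → ℝ) (z : PS n) : PS n :=
  (Jmat n).mulVec (grad F z)

/-- Hessian matrix of second partial derivatives. -/
def hess {n : ℕ} (F : PS n → ℝ) (z : PS n) :
    Matrix (Fin n ⊕ Fin n) (Fin n ⊕ Fin n) ℝ :=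
  fun i j => fderiv ℝ (fun w => fderiv ℝ F w (Pi.single j 1)) z (Pi.single i 1)

namespace Stmt11Aux

open Matrix

lemma symp_eq_dot {n : ℕ} (u v : PS n) : symp u v = u ⬝ᵥ (Jmat n).mulVec v := by
  simp [symp, Jmat, dotProduct, Matrix.mulVec, Fintype.sum_sum_type, sub_eq_add_neg,
    Matrix.one_apply, Finset.mul_sum, mul_ite]

lemma JJ {n : ℕ} : Jmat n * Jmat n = -1 := by
  rw [Jmat, Matrix.fromBlocks_multiply]
  ext i j
  rcases i with i | i <;> rcases j with j | j <;>
    simp [Matrix.fromBlocks, Matrix.one_apply]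

lemma symp_anti {n : ℕ} (u v : PS n) : symp v u = - symp u v := by
  simp only [symp, neg_sub]
  congr 1 <;> exact Finset.sum_congr rfl fun i _ => mul_comm _ _

/-- `symp` as a bilinear form. -/
def sympB (n : ℕ) : LinearMap.BilinForm ℝ (PS n) :=
  LinearMap.mk₂ ℝ symp
    (fun u u' v => by simp [symp_eq_dot, add_dotProduct])
    (fun c u v => by simp [symp_eq_dot, smul_dotProduct])
    (fun u v v' => by simp [symp_eq_dot, Matrix.mulVec_add, dotProduct_add])
    (fun c u v => by simp [symp_eq_dot, Matrix.mulVec_smul, dotProduct_smul])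

@[simp] lemma sympB_apply {n : ℕ} (u v : PS n) : sympB n u v = symp u v := rfl

lemma sympB_refl {n : ℕ} : (sympB n).IsRefl := by
  intro u v h
  simp only [sympB_apply] at *
  rw [symp_anti, h, neg_zero]

lemma symp_single_right {n : ℕ} (u : PS n) (j : Fin n ⊕ Fin n) :
    symp u (Pi.single j 1) = Sum.elim (fun j => - u (inr j)) (fun j => u (inl j)) j := by
  rcases j with j | j <;>
    simp [symp, Pi.single_apply, Finset.sum_ite_eq', mul_ite]

lemma sympB_nondeg {n : ℕ} : (sympB n).Nondegenerate := by
  refine (LinearMap.IsRefl.nondegenerate_iff_separatingLeft sympB_refl).mpr ?_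
  intro u hu
  funext j
  rcases j with j | j
  · have h := hu (Pi.single (inr j) 1)
    rw [sympB_apply, symp_single_right] at h
    simpa using h
  · have h := hu (Pi.single (inl j) 1)
    rw [sympB_apply, symp_single_right] at h
    simpa using neg_eq_zero.mp (by simpa using h)

lemma two_by_two (M : Matrix (Fin 2) (Fin 2) ℝ) (h : M.trace = 0) :
    M * M = ((M * M).trace / 2) • 1 := by
  have hd : M 1 1 = - M 0 0 := by
    rw [Matrix.trace_fin_two] at h; linarith
  ext i j
  fin_cases i <;> fin_cases j <;>
    simp [Matrix.mul_apply, Fin.sum_univ_two, Matrix.trace_fin_two, Matrix.one_apply, hd] <;>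
    ring

lemma endo_sq (V : Type*) [AddCommGroup V] [Module ℝ V] [FiniteDimensional ℝ V]
    (h2 : Module.finrank ℝ V = 2) (A : V →ₗ[ℝ] V) (hA : LinearMap.trace ℝ V A = 0) :
    A ∘ₗ A = ((LinearMap.trace ℝ V (A ∘ₗ A)) / 2) • LinearMap.id := by
  let b := Module.finBasisOfFinrankEq ℝ V h2
  apply (LinearMap.toMatrix b b).injective
  rw [LinearMap.toMatrix_comp b b b, _root_.map_smul, LinearMap.toMatrix_id,
    LinearMap.trace_eq_matrix_trace ℝ b, LinearMap.toMatrix_comp b b b]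
  exact two_by_two _ (by rw [← LinearMap.trace_eq_matrix_trace ℝ b, hA])

lemma trace_mulVecLin {m : Type*} [Fintype m] [DecidableEq m] (M : Matrix m m ℝ) :
    LinearMap.trace ℝ (m → ℝ) M.mulVecLin = M.trace := by
  have h : M.mulVecLin = Matrix.toLin' M := by
    ext v; simp [Matrix.toLin'_apply]
  rw [h, LinearMap.trace_eq_matrix_trace ℝ (Pi.basisFun ℝ m),
    LinearMap.toMatrix_eq_toMatrix', LinearMap.toMatrix'_toLin']

end Stmt11Aux

section MainProof

open Matrix Stmt11Aux Module LinearMap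

lemma symp_add_right {n : ℕ} (u x y : PS n) : symp u (x + y) = symp u x + symp u y := by
  simp [symp_eq_dot, Matrix.mulVec_add, dotProduct_add]

lemma symp_smul_right {n : ℕ} (u x : PS n) (a : ℝ) : symp u (a • x) = a * symp u x := by
  simp [symp_eq_dot, Matrix.mulVec_smul, dotProduct_smul]

lemma symp_self {n : ℕ} (u : PS n) : symp u u = 0 := by
  simp only [symp]
  rw [sub_eq_zero]
  exact Finset.sum_congr rfl fun i _ => mul_comm _ _

lemma symp_zero_left {n : ℕ} (v : PS n) : symp 0 v = 0 := by simp [symp]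

lemma symp_zero_right {n : ℕ} (v : PS n) : symp v 0 = 0 := by simp [symp]

set_option maxHeartbeats 1000000 in
set_option synthInstance.maxHeartbeats 400000 in
/-- under the hypotheses of Proposition 3, with `β` and `J·β`
skew-orthogonal to `λ` and `η = K·β`, `θ = K·J·β`, one has `[η,θ] = τ·|β|²`;
in particular `sign [η,θ] = sign τ`, and `η, θ` are linearly independent and
span `im K²`. -/
theorem stmt11 {n : ℕ} (K : Matrix (Fin n ⊕ Fin n) (Fin n ⊕ Fin n) ℝ)
    (hK : ∀ u v : PS n, symp (K.mulVec u) v + symp u (K.mulVec v) = 0)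
    (hτ : (1 / 2 : ℝ) * (K * K).trace ≠ 0)
    (lam : Submodule ℝ (PS n))
    (hlamdim : Module.finrank ℝ lam = n - 1)
    (hiso : ∀ u ∈ lam, ∀ v ∈ lam, symp u v = 0)
    (hKlam : ∀ v ∈ lam, K.mulVec v = 0)
    (β : PS n) (hβ : β ≠ 0)
    (hβlam : ∀ v ∈ lam, symp β v = 0)
    (hJβlam : ∀ v ∈ lam, symp ((Jmat n).mulVec β) v = 0) :
    symp (K.mulVec β) (K.mulVec ((Jmat n).mulVec β)) =
      ((1 / 2 : ℝ) * (K * K).trace) * (∑ i, β i ^ 2) ∧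
    Real.sign (symp (K.mulVec β) (K.mulVec ((Jmat n).mulVec β))) =
      Real.sign ((1 / 2 : ℝ) * (K * K).trace) ∧
    LinearIndependent ℝ ![K.mulVec β, K.mulVec ((Jmat n).mulVec β)] ∧
    Submodule.span ℝ {K.mulVec β, K.mulVec ((Jmat n).mulVec β)} =
      LinearMap.range (K * K).mulVecLin := by
  classical
  rcases Nat.eq_zero_or_pos n with hn0 | hn
  · subst hn0
    exact absurd (funext fun i => by rcases i with i | i <;> exact i.elim0) hβ
  set τ : ℝ := (1/2 : ℝ) * (K*K).trace with hτdef
  set f : PS n →ₗ[ℝ] PS n := K.mulVecLin with hfdef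
  have hfapp : ∀ x, f x = K.mulVec x := fun x => rfl
  have hKsymm : ∀ u v : PS n, symp (K.mulVec u) v = - symp u (K.mulVec v) := fun u v => by
    have := hK u v; linarith
  -- trace of K is zero
  have hJK : Kᵀ * Jmat n + Jmat n * K = 0 := by
    ext i j
    have h := hK (Pi.single i 1) (Pi.single j 1)
    rw [symp_eq_dot, symp_eq_dot] at h
    simpa [Matrix.mulVec_mulVec, Matrix.mulVec_single_one, Matrix.mul_apply, dotProduct,
      Matrix.transpose_apply, Pi.single_apply, Finset.sum_ite_eq', Matrix.mulVec,
      Fintype.sum_sum_type, mul_comm] using h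
  have h1 : Jmat n * K = -(Kᵀ * Jmat n) := by
    have := hJK; linear_combination (norm := abel) this
  have htrK : K.trace = 0 := by
    have h2 : K = Jmat n * (Kᵀ * Jmat n) := by
      calc K = -Jmat n * (Jmat n * K) := by
              rw [← Matrix.mul_assoc, Matrix.neg_mul, JJ, neg_neg, Matrix.one_mul]
        _ = -Jmat n * (-(Kᵀ * Jmat n)) := by rw [h1]
        _ = Jmat n * (Kᵀ * Jmat n) := by rw [Matrix.neg_mul, Matrix.mul_neg, neg_neg]
    have h3 : K.trace = - K.trace := by
      calc K.trace = (Jmat n * (Kᵀ * Jmat n)).trace := by rw [← h2]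
        _ = ((Kᵀ * Jmat n) * Jmat n).trace := Matrix.trace_mul_comm _ _
        _ = (Kᵀ * (Jmat n * Jmat n)).trace := by rw [Matrix.mul_assoc]
        _ = (-Kᵀ).trace := by rw [JJ, Matrix.mul_neg, Matrix.mul_one]
        _ = - K.trace := by rw [Matrix.trace_neg, Matrix.trace_transpose]
    linarith
  -- the subspace W = lam-skew-orthogonal
  set W : Submodule ℝ (PS n) := (sympB n).orthogonal lam with hWdef
  have hmemW : ∀ u, u ∈ W ↔ ∀ v ∈ lam, symp v u = 0 := fun u => by
    rw [hWdef, LinearMap.BilinForm.mem_orthogonal_iff]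
    simp [LinearMap.BilinForm.isOrtho_def]
  have hdim : Module.finrank ℝ (PS n) = n + n := by
    rw [Module.finrank_fintype_fun_eq_card]
    simp
  have hlamle : Module.finrank ℝ lam ≤ Module.finrank ℝ (PS n) := lam.finrank_le
  have hWrank : Module.finrank ℝ W = n + 1 := by
    have h := LinearMap.BilinForm.finrank_orthogonal (sympB_nondeg (n := n)) lam
    rw [hdim, hlamdim] at h
    rw [← hWdef] at h
    omega
  have hlamW : lam ≤ W := fun v hv => (hmemW v).2 (fun u hu => hiso u hu v hv)
  have hrangeW : ∀ x, f x ∈ W := fun x => (hmemW _).2 fun v hv => by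
    have h := hKsymm v x
    rw [hKlam v hv, symp_zero_left] at h
    rw [hfapp]
    linarith
  have hkerf : lam ≤ LinearMap.ker f := fun v hv => by
    rw [LinearMap.mem_ker, hfapp, hKlam v hv]
  -- quotient by lam
  set π : PS n →ₗ[ℝ] (PS n ⧸ lam) := lam.mkQ with hπdef
  set g : (PS n ⧸ lam) →ₗ[ℝ] PS n := lam.liftQ f hkerf with hgdef
  have hgπ : g ∘ₗ π = f := lam.liftQ_mkQ f hkerf
  set A : (PS n ⧸ lam) →ₗ[ℝ] (PS n ⧸ lam) := π ∘ₗ g with hAdef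
  have hAπ : ∀ x, A (π x) = π (f x) := fun x => by
    rw [hAdef, LinearMap.comp_apply, ← LinearMap.comp_apply g π, hgπ]
  have htrf : LinearMap.trace ℝ _ f = 0 := by
    rw [hfdef, trace_mulVecLin, htrK]
  have htrf2 : LinearMap.trace ℝ _ (f ∘ₗ f) = (K * K).trace := by
    rw [hfdef, ← Matrix.mulVecLin_mul, trace_mulVecLin]
  have htrA : LinearMap.trace ℝ _ A = 0 := by
    rw [hAdef, LinearMap.trace_comp_comm' g π, hgπ, htrf]
  have hAA : A ∘ₗ A = π ∘ₗ ((f ∘ₗ g)) := by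
    rw [hAdef, LinearMap.comp_assoc, ← LinearMap.comp_assoc g π g, hgπ]
  have htrA2 : LinearMap.trace ℝ _ (A ∘ₗ A) = (K * K).trace := by
    rw [hAA, LinearMap.trace_comp_comm' (f ∘ₗ g) π, LinearMap.comp_assoc, hgπ, htrf2]
  -- the two-dimensional image of W in the quotient
  set Wq : Submodule ℝ (PS n ⧸ lam) := W.map π with hWqdef
  have hAq : ∀ q, A q ∈ Wq := by
    intro q
    obtain ⟨x, rfl⟩ := Submodule.mkQ_surjective lam q
    rw [show lam.mkQ x = π x from rfl, hAπ]
    exact Submodule.mem_map_of_mem (hrangeW x)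
  set A' : Wq →ₗ[ℝ] Wq := A.restrict (fun x _ => hAq x) with hA'def
  have hkerπW : LinearMap.ker (π.domRestrict W) = lam.comap W.subtype := by
    rw [hπdef, LinearMap.ker_domRestrict, Submodule.ker_mkQ]
  have hlamW' : Module.finrank ℝ (lam.comap W.subtype) = n - 1 := by
    rw [← hlamdim]
    exact (Submodule.comapSubtypeEquivOfLe hlamW).finrank_eq
  have hrn := LinearMap.finrank_range_add_finrank_ker (π.domRestrict W)
  rw [LinearMap.range_domRestrict, hkerπW, hlamW', hWrank] at hrn
  have hWq2 : Module.finrank ℝ Wq = 2 := by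
    rw [hWqdef] at *; omega
  have htrA' : LinearMap.trace ℝ _ A' = 0 := by
    rw [hA'def, LinearMap.trace_restrict_eq_of_forall_mem Wq A hAq, htrA]
  have hAAq : ∀ x, (A ∘ₗ A) x ∈ Wq := fun x => hAq _
  have hres : (A ∘ₗ A).restrict (fun x _ => hAAq x) = A' ∘ₗ A' := by
    ext x
    simp [LinearMap.restrict_coe_apply, hA'def]
  have htrA2' : LinearMap.trace ℝ _ (A' ∘ₗ A') = (K * K).trace := by
    rw [← hres, LinearMap.trace_restrict_eq_of_forall_mem Wq (A ∘ₗ A) hAAq, htrA2]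
  have hsq : A' ∘ₗ A' = τ • LinearMap.id := by
    rw [endo_sq Wq hWq2 A' htrA', htrA2', hτdef]
    ring_nf
  -- the key structural fact
  have hkey : ∀ w ∈ W, f (f w) - τ • w ∈ lam := by
    intro w hw
    have hmem : π w ∈ Wq := Submodule.mem_map_of_mem hw
    have h := congrArg Subtype.val (LinearMap.congr_fun hsq ⟨π w, hmem⟩)
    simp only [LinearMap.comp_apply, LinearMap.smul_apply, LinearMap.id_apply,
      LinearMap.restrict_coe_apply, SetLike.val_smul, hA'def] at h
    rw [hAπ, hAπ] at h
    have h2 : π (f (f w) - τ • w) = 0 := by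
      rw [map_sub, _root_.map_smul, h, sub_self]
    rwa [hπdef, Submodule.mkQ_apply, Submodule.Quotient.mk_eq_zero] at h2
  -- memberships of β and Jβ
  have hβW : β ∈ W := (hmemW β).2 fun v hv => by
    rw [symp_anti, hβlam v hv, neg_zero]
  have hJβW : (Jmat n).mulVec β ∈ W := (hmemW _).2 fun v hv => by
    rw [symp_anti, hJβlam v hv, neg_zero]
  -- the symplectic product computation
  have hJβ2 : (Jmat n).mulVec ((Jmat n).mulVec β) = -β := by
    rw [Matrix.mulVec_mulVec, JJ, Matrix.neg_mulVec, Matrix.one_mulVec]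
  have hsympβJβ : symp β ((Jmat n).mulVec β) = -(∑ i, β i ^ 2) := by
    rw [symp_eq_dot, hJβ2]
    simp [dotProduct, sq]
  have hwmem := hkey ((Jmat n).mulVec β) hJβW
  have hdecomp : K.mulVec (K.mulVec ((Jmat n).mulVec β)) =
      τ • ((Jmat n).mulVec β) + (f (f ((Jmat n).mulVec β)) - τ • ((Jmat n).mulVec β)) := by
    rw [← hfapp, ← hfapp]; abel
  have hmain : symp (K.mulVec β) (K.mulVec ((Jmat n).mulVec β)) = τ * (∑ i, β i ^ 2) := by
    rw [hKsymm β (K.mulVec ((Jmat n).mulVec β)), hdecomp, symp_add_right, symp_smul_right,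
      hsympβJβ, hβlam _ hwmem]
    ring
  -- positivity of the norm squared
  have hS : 0 < ∑ i, β i ^ 2 := by
    obtain ⟨i, hi⟩ : ∃ i, β i ≠ 0 := by
      by_contra h; push_neg at h; exact hβ (funext h)
    exact Finset.sum_pos' (fun j _ => sq_nonneg _) ⟨i, Finset.mem_univ i, by positivity⟩
  have hli : LinearIndependent ℝ ![K.mulVec β, K.mulVec ((Jmat n).mulVec β)] := by
    have hne : symp (K.mulVec β) (K.mulVec ((Jmat n).mulVec β)) ≠ 0 := by
      rw [hmain]; exact mul_ne_zero hτ (ne_of_gt hS)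
    rw [LinearIndependent.pair_iff]
    intro s t hst
    have hη : K.mulVec β ≠ 0 := fun h => hne (by rw [h, symp_zero_left])
    have h1 : t = 0 := by
      have h := congrArg (symp (K.mulVec β)) hst
      rw [symp_add_right, symp_smul_right, symp_smul_right, symp_self, symp_zero_right] at h
      have := mul_eq_zero.mp
        (by linarith : t * symp (K.mulVec β) (K.mulVec ((Jmat n).mulVec β)) = 0)
      tauto
    subst h1
    rw [zero_smul, add_zero] at hst
    exact ⟨(smul_eq_zero.mp hst).resolve_right hη, rfl⟩
  refine ⟨hmain, ?_, hli, ?_⟩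
  · rcases hτ.lt_or_gt with h | h
    · rw [hmain, Real.sign_of_neg (mul_neg_of_neg_of_pos h hS), Real.sign_of_neg h]
    · rw [hmain, Real.sign_of_pos (mul_pos h hS), Real.sign_of_pos h]
  · -- span equals range of K²
    have hKK : (K * K).mulVecLin = f ∘ₗ f := by
      rw [hfdef, Matrix.mulVecLin_mul]
    -- span ≤ range
    have hval : ∀ x ∈ W, (K * K).mulVecLin (τ⁻¹ • f x) = f x := by
      intro x hx
      have hdx : f (f x) = τ • x + (f (f x) - τ • x) := by abel
      have hz : f (f (f x) - τ • x) = 0 := hkerf (hkey x hx)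
      rw [hKK, LinearMap.comp_apply, _root_.map_smul, _root_.map_smul, hdx, map_add, hz, add_zero,
        _root_.map_smul, smul_smul, inv_mul_cancel₀ hτ, one_smul]
    have hle : Submodule.span ℝ {K.mulVec β, K.mulVec ((Jmat n).mulVec β)} ≤
        LinearMap.range (K * K).mulVecLin := by
      rw [Submodule.span_le]
      rintro x (rfl | rfl)
      · exact ⟨τ⁻¹ • f β, hval β hβW⟩
      · exact ⟨τ⁻¹ • f ((Jmat n).mulVec β), hval _ hJβW⟩
    -- finrank comparisons
    have hsetrange : ({K.mulVec β, K.mulVec ((Jmat n).mulVec β)} : Set (PS n)) =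
        Set.range ![K.mulVec β, K.mulVec ((Jmat n).mulVec β)] := by
      simp only [Matrix.range_cons, Matrix.range_empty, Set.union_empty,
        Set.union_singleton]
      exact Set.pair_comm _ _
    have hspanrank : Module.finrank ℝ
        (Submodule.span ℝ {K.mulVec β, K.mulVec ((Jmat n).mulVec β)}) = 2 := by
      rw [hsetrange, finrank_span_eq_card hli]
      simp
    have hrlef : LinearMap.range f ≤ W := by
      rintro x ⟨y, rfl⟩; exact hrangeW y
    have hrn2 := LinearMap.finrank_range_add_finrank_ker (f.domRestrict W)
    have hkerle : lam.comap W.subtype ≤ LinearMap.ker (f.domRestrict W) := by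
      intro x hx
      simp only [LinearMap.mem_ker, LinearMap.domRestrict_apply]
      exact hkerf (Submodule.mem_comap.mp hx)
    have hkerge : n - 1 ≤ Module.finrank ℝ (LinearMap.ker (f.domRestrict W)) := by
      rw [← hlamW']
      exact Submodule.finrank_mono hkerle
    rw [LinearMap.range_domRestrict, hWrank] at hrn2
    have hmaple : Module.finrank ℝ (W.map f) ≤ 2 := by omega
    have hranklee : Module.finrank ℝ (LinearMap.range (K * K).mulVecLin) ≤ 2 := by
      rw [hKK, LinearMap.range_comp]
      calc Module.finrank ℝ ((LinearMap.range f).map f)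
          ≤ Module.finrank ℝ (W.map f) := Submodule.finrank_mono (Submodule.map_mono hrlef)
        _ ≤ 2 := hmaple
    exact (Submodule.eq_of_le_of_finrank_le hle (by rw [hspanrank]; exact hranklee)).symm ▸ rfl

end MainProof
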